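/- arXiv:0907.2460 — 4 statements merged into one kernel-verified Lean document; each statement's English description precedes it below -/
import Mathlib

section
/- Let X be a compact Hausdorff topological space and let lim : Ultrafilter X → X assign to each ultrafilter its unique limit point (so ↑F ≤ 𝓝 (lim F) for all F). Then lim (pure x) = x for all x ∈ X, and for every ultrafilter 𝔾 on Ultrafilter X, lim (Ultrafilter.join 𝔾) = lim (Ultrafilter.map lim 𝔾). -/
open Filter Topology

/-- The monad multiplication (join) of the ultrafilter monad. -/
def Ultrafilter.join {α : Type*} (𝔾 : Ultrafilter (Ultrafilter α)) : Ultrafilter α :=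
  𝔾.bind id

/-- For a compact Hausdorff space, the map assigning to each ultrafilter its unique
limit is an algebra structure for the ultrafilter monad. -/
theorem stmt3 {X : Type*} [TopologicalSpace X] [CompactSpace X] [T2Space X]
    (lim : Ultrafilter X → X)
    (hlim : ∀ F : Ultrafilter X, (F : Filter X) ≤ 𝓝 (lim F)) :
    (∀ x : X, lim (pure x) = x) ∧
    (∀ 𝔾 : Ultrafilter (Ultrafilter X),
      lim (Ultrafilter.join 𝔾) = lim (Ultrafilter.map lim 𝔾)) := by
  have key : ∀ (F : Ultrafilter X) (x : X), (F : Filter X) ≤ 𝓝 x → lim F = x := by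
    intro F x hx
    exact tendsto_nhds_unique (f := id) (l := (F : Filter X)) (hlim F) hx
  constructor
  · intro x
    exact key _ _ (pure_le_nhds x)
  · intro FF
    set x := lim (Ultrafilter.map lim FF) with c1
    have c2 : ∀ (U : Set X) (F : Ultrafilter X), lim F ∈ U → IsOpen U → U ∈ F := by
      intro U F h1 hU
      exact isOpen_iff_ultrafilter.mp hU _ h1 _ (hlim _)
    have c3 : ↑(Ultrafilter.map lim FF) ≤ 𝓝 x := hlim _
    have c4 : ∀ U : Set X, x ∈ U → IsOpen U → { G : Ultrafilter X | U ∈ G } ∈ FF := by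
      intro U hx hU
      suffices lim ⁻¹' U ∈ FF by
        apply mem_of_superset this
        intro P hP
        exact c2 U P hP hU
      exact @c3 U (IsOpen.mem_nhds hU hx)
    apply key
    rw [le_nhds_iff]
    intro U hx hU
    exact c4 U hx hU
end

section
/- Let X be a set and m : Ultrafilter X → X a function satisfying m (pure x) = x for all x, and m (Ultrafilter.join 𝔾) = m (Ultrafilter.map m 𝔾) for every ultrafilter 𝔾 on Ultrafilter X. Then there exists a unique topology on X which is compact and Hausdorff and in which every ultrafilter F converges to m F (i.e. ↑F ≤ 𝓝 (m F)). -/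
open Filter Topology

open CategoryTheory

theorem my_isClosed_iff {X : Type*} (m : Ultrafilter X → X) (t : TopologicalSpace X)
    (ht : @T2Space X t) (hconv : ∀ F : Ultrafilter X, (F : Filter X) ≤ @nhds X t (m F))
    (S : Set X) :
    IsClosed[t] S ↔ ∀ F : Ultrafilter X, S ∈ F → m F ∈ S := by
  constructor
  · intro hS F hF
    letI := t
    have : m F ∈ closure S := mem_closure_iff_ultrafilter.2 ⟨F, hF, hconv F⟩
    rwa [closure_eq_iff_isClosed.2 hS] at this
  · intro h
    letI := t
    rw [← closure_eq_iff_isClosed]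
    apply subset_antisymm _ subset_closure
    intro x hx
    obtain ⟨F, hFS, hFx⟩ := mem_closure_iff_ultrafilter.1 hx
    have : x = m F := tendsto_nhds_unique (f := id) (l := (F : Filter X)) hFx (hconv F)
    exact this ▸ h F hFS

/-- Manes' theorem: an algebra structure for the ultrafilter monad on a set `X`
determines a unique compact Hausdorff topology in which each ultrafilter `F`
converges to `m F`. -/
theorem stmt4 {X : Type*} (m : Ultrafilter X → X)
    (h1 : ∀ x : X, m (pure x) = x)
    (h2 : ∀ 𝔾 : Ultrafilter (Ultrafilter X),
      m (Ultrafilter.join 𝔾) = m (Ultrafilter.map m 𝔾)) :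
    ∃! t : TopologicalSpace X,
      @CompactSpace X t ∧ @T2Space X t ∧
      ∀ F : Ultrafilter X, (F : Filter X) ≤ @nhds X t (m F) := by
  let C : Compactum :=
    { A := X
      a := ↾m
      unit := by ext x; exact h1 x
      assoc := by ext 𝔾; exact h2 𝔾 }
  have hstr : C.str = m := rfl
  letI t0 : TopologicalSpace X := @Compactum.instTopologicalSpaceA C
  refine ⟨t0,
    ⟨Compactum.instCompactSpaceA (X := C), Compactum.instT2SpaceA (X := C),
      fun F => Compactum.le_nhds_of_str_eq (X := C) F (m F) rfl⟩, ?_⟩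
  rintro t ⟨hc, ht, hconv⟩
  apply TopologicalSpace.ext_isClosed
  intro S
  rw [my_isClosed_iff m t ht hconv S]
  exact (Compactum.isClosed_iff (X := C) S).symm
end

section
/- For a relation r : X → Y → Prop, define its Barr extension Ûr : Ultrafilter X → Ultrafilter Y → Prop by Ûr F G := ∃ 𝒰 : Ultrafilter {p : X × Y // r p.1 p.2}, Ultrafilter.map (fun p => p.1.1) 𝒰 = F ∧ Ultrafilter.map (fun p => p.1.2) 𝒰 = G. Then the Barr extension preserves relational composition: for relations r : X → Y → Prop and s : Y → Z → Prop, and ultrafilters F on X and H on Z, Û(s ∘ r) F H holds if and only if there exists an ultrafilter G on Y with Ûr F G and Ûs G H, where (s ∘ r) x z := ∃ y, r x y ∧ s y z. -/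
open Filter

/-- The Barr extension of a relation `r : X → Y → Prop` to ultrafilters. -/
def barrExt {X Y : Type*} (r : X → Y → Prop) (F : Ultrafilter X) (G : Ultrafilter Y) : Prop :=
  ∃ 𝒰 : Ultrafilter {p : X × Y // r p.1 p.2},
    Ultrafilter.map (fun p => p.1.1) 𝒰 = F ∧ Ultrafilter.map (fun p => p.1.2) 𝒰 = G

/-- The Barr extension preserves relational composition. -/
theorem stmt6 {X Y Z : Type*} (r : X → Y → Prop) (s : Y → Z → Prop)
    (F : Ultrafilter X) (H : Ultrafilter Z) :
    barrExt (fun x z => ∃ y, r x y ∧ s y z) F H ↔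
      ∃ G : Ultrafilter Y, barrExt r F G ∧ barrExt s G H := by
  constructor
  · rintro ⟨𝒰, hF, hH⟩
    classical
    choose y hy1 hy2 using fun p : {p : X × Z // ∃ y, r p.1 y ∧ s y p.2} => p.2
    refine ⟨Ultrafilter.map y 𝒰,
      ⟨Ultrafilter.map (fun p => (⟨(p.1.1, y p), hy1 p⟩ : {q : X × Y // r q.1 q.2})) 𝒰, ?_, ?_⟩,
      ⟨Ultrafilter.map (fun p => (⟨(y p, p.1.2), hy2 p⟩ : {q : Y × Z // s q.1 q.2})) 𝒰, ?_, ?_⟩⟩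
    · rw [← hF]
      apply Ultrafilter.coe_injective
      simp [Filter.map_map]
      rfl
    · apply Ultrafilter.coe_injective
      simp [Filter.map_map]
      rfl
    · apply Ultrafilter.coe_injective
      simp [Filter.map_map]
      rfl
    · rw [← hH]
      apply Ultrafilter.coe_injective
      simp [Filter.map_map]
      rfl
  · rintro ⟨G, ⟨𝒰, hUF, hUG⟩, ⟨𝒱, hVG, hVH⟩⟩
    let T := {t : X × Y × Z // r t.1 t.2.1 ∧ s t.2.1 t.2.2}
    let f : T → {p : X × Y // r p.1 p.2} := fun t => ⟨(t.1.1, t.1.2.1), t.2.1⟩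
    let g : T → {p : Y × Z // s p.1 p.2} := fun t => ⟨(t.1.2.1, t.1.2.2), t.2.2⟩
    have hne : (Filter.comap f ↑𝒰 ⊓ Filter.comap g ↑𝒱).NeBot := by
      rw [Filter.inf_neBot_iff]
      intro a ha b hb
      obtain ⟨U, hU, hUa⟩ := Filter.mem_comap.mp ha
      obtain ⟨V, hV, hVb⟩ := Filter.mem_comap.mp hb
      have hA : (fun q : {p : X × Y // r p.1 p.2} => q.1.2) '' U ∈ G := by
        rw [← hUG]; exact Filter.image_mem_map hU
      have hB : (fun q : {p : Y × Z // s p.1 p.2} => q.1.1) '' V ∈ G := by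
        rw [← hVG]; exact Filter.image_mem_map hV
      obtain ⟨y0, hy0A, hy0B⟩ := Ultrafilter.nonempty_of_mem (G.inter_mem hA hB)
      obtain ⟨⟨⟨x0, y0'⟩, hr0⟩, hqU, hq⟩ := hy0A
      obtain ⟨⟨⟨y0'', z0⟩, hs0⟩, hqV, hq'⟩ := hy0B
      simp only at hq hq'
      obtain rfl : y0' = y0'' := hq.trans hq'.symm
      refine ⟨⟨(x0, y0', z0), hr0, hs0⟩, hUa ?_, hVb ?_⟩
      · exact hqU
      · exact hqV
    obtain ⟨𝒲, h𝒲⟩ := Ultrafilter.exists_le (Filter.comap f ↑𝒰 ⊓ Filter.comap g ↑𝒱)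
    have hfW : Ultrafilter.map f 𝒲 = 𝒰 := by
      exact Ultrafilter.coe_le_coe.mp
        (le_trans (Filter.map_mono (le_trans h𝒲 inf_le_left)) Filter.map_comap_le)
    have hgW : Ultrafilter.map g 𝒲 = 𝒱 := by
      exact Ultrafilter.coe_le_coe.mp
        (le_trans (Filter.map_mono (le_trans h𝒲 inf_le_right)) Filter.map_comap_le)
    refine ⟨Ultrafilter.map (fun t : T =>
        (⟨(t.1.1, t.1.2.2), ⟨t.1.2.1, t.2.1, t.2.2⟩⟩ :
          {p : X × Z // ∃ y, r p.1 y ∧ s y p.2})) 𝒲, ?_, ?_⟩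
    · rw [← hUF, ← hfW]
      apply Ultrafilter.coe_injective
      simp [Filter.map_map]
      rfl
    · rw [← hVH, ← hgW]
      apply Ultrafilter.coe_injective
      simp [Filter.map_map]
      rfl
end

section
/- Let X be a topological space and define conv : Ultrafilter X → X → Prop by conv G x := ↑G ≤ 𝓝 x. Let the Barr extension of conv be the relation on Ultrafilter (Ultrafilter X) × Ultrafilter X given by c̄onv 𝔾 F := ∃ 𝒰 : Ultrafilter {p : Ultrafilter X × X // conv p.1 p.2}, Ultrafilter.map (fun p => p.1.1) 𝒰 = 𝔾 ∧ Ultrafilter.map (fun p => p.1.2) 𝒰 = F. Then: (1) conv (pure x) x for all x; and (2) if c̄onv 𝔾 F and conv F x, then conv (Ultrafilter.join 𝔾) x. -/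
open Filter Topology

/-- The ultrafilter convergence relation of a topological space satisfies the unit and
multiplication laws of a lax algebra for the ultrafilter monad (Barr). -/
theorem stmt7 {X : Type*} [TopologicalSpace X] :
    (∀ x : X, (pure x : Filter X) ≤ 𝓝 x) ∧
    (∀ (𝔾 : Ultrafilter (Ultrafilter X)) (F : Ultrafilter X) (x : X),
      (∃ 𝒰 : Ultrafilter {p : Ultrafilter X × X // (p.1 : Filter X) ≤ 𝓝 p.2},
        Ultrafilter.map (fun p => p.1.1) 𝒰 = 𝔾 ∧
        Ultrafilter.map (fun p => p.1.2) 𝒰 = F) →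
      (F : Filter X) ≤ 𝓝 x →
      (Ultrafilter.join 𝔾 : Filter X) ≤ 𝓝 x) := by
  refine ⟨fun x => pure_le_nhds x, ?_⟩
  rintro 𝔾 F x ⟨𝒰, h1, h2⟩ hF
  rw [le_nhds_iff]
  intro U hxU hU
  have hUF : U ∈ F := le_nhds_iff.mp hF U hxU hU
  rw [← h2, Ultrafilter.mem_map] at hUF
  have key : {p : {p : Ultrafilter X × X // (p.1 : Filter X) ≤ 𝓝 p.2} | U ∈ p.1.1} ∈ 𝒰 :=
    𝒰.toFilter.sets_of_superset hUF (fun p hp => p.2 (hU.mem_nhds hp))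
  have : {G : Ultrafilter X | U ∈ G} ∈ 𝔾 := by
    rw [← h1, Ultrafilter.mem_map]
    exact key
  exact this
end
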